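/- Let Λ be a ring and 𝒴 a full subcategory of finitely generated Λ-modules closed under extensions. Suppose 0 → C₁ → Y → C₀ → 0 is a short exact sequence with Y ∈ 𝒴, and 0 → Y₀ → X → C₀ → 0 is a short exact sequence with Y₀ ∈ 𝒴. Then there exists a short exact sequence 0 → C₁ → Y₁ → X → 0 with Y₁ ∈ 𝒴. -/

import Mathlib

open CategoryTheory

noncomputable section
set_option maxHeartbeats 1600000
set_option synthInstance.maxHeartbeats 400000

/-- `0 → A → B → C → 0` is a short exact sequence of modules. -/
def IsSES {R : Type} [Ring R] {A B C : ModuleCat.{0} R} (i : A ⟶ B) (p : B ⟶ C) : Prop :=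
  Function.Injective i ∧ Function.Exact i p ∧ Function.Surjective p

/-- Lemma 2.1: given short exact sequences `0 \to C_1 \to Y \to C_0 \to 0` with
`Y \in \mathcal{Y}` and `0 \to Y_0 \to X \to C_0 \to 0` with `Y_0 \in \mathcal{Y}`, where
`\mathcal{Y}` is closed under extensions, there is a short exact sequence
`0 \to C_1 \to Y_1 \to X \to 0` with `Y_1 \in \mathcal{Y}`. -/
theorem stmt0 (Λ : Type) [Ring Λ] (𝒴 : Set (ModuleCat.{0} Λ))
    (hext : ∀ (A B C : ModuleCat.{0} Λ) (i : A ⟶ B) (p : B ⟶ C),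
      IsSES i p → A ∈ 𝒴 → C ∈ 𝒴 → B ∈ 𝒴)
    (C₁ Y C₀ Y₀ X : ModuleCat.{0} Λ)
    [Module.Finite Λ C₁] [Module.Finite Λ Y] [Module.Finite Λ C₀]
    [Module.Finite Λ Y₀] [Module.Finite Λ X]
    (f : C₁ ⟶ Y) (g : Y ⟶ C₀) (hY : Y ∈ 𝒴) (h₁ : IsSES f g)
    (f' : Y₀ ⟶ X) (g' : X ⟶ C₀) (hY₀ : Y₀ ∈ 𝒴) (h₂ : IsSES f' g') :
    ∃ (Y₁ : ModuleCat.{0} Λ) (u : C₁ ⟶ Y₁) (v : Y₁ ⟶ X),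
      Module.Finite Λ Y₁ ∧ Y₁ ∈ 𝒴 ∧ IsSES u v := by
  obtain ⟨hf, hfg, hg⟩ := h₁
  obtain ⟨hf', hfg', hg'⟩ := h₂
  have hker₁ : LinearMap.ker g.hom = LinearMap.range f.hom :=
    LinearMap.exact_iff.mp hfg
  have hker₂ : LinearMap.ker g'.hom = LinearMap.range f'.hom :=
    LinearMap.exact_iff.mp hfg'
  set φ : (Y × X) →ₗ[Λ] C₀ :=
    g.hom ∘ₗ LinearMap.fst Λ Y X - g'.hom ∘ₗ LinearMap.snd Λ Y X with hφ
  set S : Submodule Λ (Y × X) := LinearMap.ker φ with hS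
  have memS : ∀ z : Y × X, z ∈ S ↔ g z.1 = g' z.2 := by
    intro z
    simp [hS, hφ, sub_eq_zero]
  refine ⟨ModuleCat.of Λ S, ?_, ?_, ?_, ?_, ?_, ?_, ?_⟩
  -- u : C₁ → S
  · exact ModuleCat.ofHom (LinearMap.codRestrict S (LinearMap.inl Λ Y X ∘ₗ f.hom)
      (fun c => (memS _).mpr (by simpa using hfg.apply_apply_eq_zero c)))
  -- v : S → X
  · exact ModuleCat.ofHom (LinearMap.snd Λ Y X ∘ₗ S.subtype)
  -- finiteness
  · set π : S →ₗ[Λ] Y := LinearMap.fst Λ Y X ∘ₗ S.subtype with hπ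
    have hπsurj : Function.Surjective π := by
      intro y
      obtain ⟨x, hx⟩ := hg' (g y)
      exact ⟨⟨(y, x), (memS _).mpr hx.symm⟩, rfl⟩
    set j : Y₀ →ₗ[Λ] S := LinearMap.codRestrict S (LinearMap.inr Λ Y X ∘ₗ f'.hom)
      (fun y₀ => (memS _).mpr (by simpa using (hfg'.apply_apply_eq_zero y₀).symm)) with hj
    have hkerπ : LinearMap.ker π = LinearMap.range j := by
      ext ⟨⟨y, x⟩, hz⟩
      simp only [LinearMap.mem_ker, LinearMap.mem_range, hπ, hj, LinearMap.comp_apply,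
        Submodule.subtype_apply, LinearMap.fst_apply]
      constructor
      · intro hy
        have hx : x ∈ LinearMap.range f'.hom := by
          rw [← hker₂, LinearMap.mem_ker]
          have := (memS (y, x)).mp hz
          simp only at this
          rw [← this, hy, map_zero]
        obtain ⟨y₀, hy₀⟩ := hx
        exact ⟨y₀, by ext : 1 <;> simp [LinearMap.codRestrict, hy₀, hy.symm]⟩
      · rintro ⟨y₀, hy₀⟩
        have := congrArg (fun z : S => (z : Y × X).1) hy₀
        simpa [LinearMap.codRestrict] using this.symm
    rw [Module.finite_def]
    apply Submodule.fg_of_fg_map_of_fg_inf_ker π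
    · rw [Submodule.map_top, LinearMap.range_eq_top.mpr hπsurj]
      exact Module.finite_def.mp ‹Module.Finite Λ Y›
    · rw [top_inf_eq, hkerπ, ← Submodule.map_top]
      exact (Module.finite_def.mp ‹Module.Finite Λ Y₀›).map j
  -- S ∈ 𝒴
  · set π : S →ₗ[Λ] Y := LinearMap.fst Λ Y X ∘ₗ S.subtype with hπ
    have hπsurj : Function.Surjective π := by
      intro y
      obtain ⟨x, hx⟩ := hg' (g y)
      exact ⟨⟨(y, x), (memS _).mpr hx.symm⟩, rfl⟩
    set j : Y₀ →ₗ[Λ] S := LinearMap.codRestrict S (LinearMap.inr Λ Y X ∘ₗ f'.hom)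
      (fun y₀ => (memS _).mpr (by simpa using (hfg'.apply_apply_eq_zero y₀).symm)) with hj
    have hkerπ : LinearMap.ker π = LinearMap.range j := by
      ext ⟨⟨y, x⟩, hz⟩
      simp only [LinearMap.mem_ker, LinearMap.mem_range, hπ, hj, LinearMap.comp_apply,
        Submodule.subtype_apply, LinearMap.fst_apply]
      constructor
      · intro hy
        have hx : x ∈ LinearMap.range f'.hom := by
          rw [← hker₂, LinearMap.mem_ker]
          have := (memS (y, x)).mp hz
          simp only at this
          rw [← this, hy, map_zero]
        obtain ⟨y₀, hy₀⟩ := hx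
        exact ⟨y₀, by ext : 1 <;> simp [LinearMap.codRestrict, hy₀, hy.symm]⟩
      · rintro ⟨y₀, hy₀⟩
        have := congrArg (fun z : S => (z : Y × X).1) hy₀
        simpa [LinearMap.codRestrict] using this.symm
    refine hext Y₀ (ModuleCat.of Λ S) Y (ModuleCat.ofHom j) (ModuleCat.ofHom π) ⟨?_, ?_, hπsurj⟩ hY₀ hY
    · intro a b hab
      apply hf'
      have := congrArg (fun z : S => (z : Y × X).2) hab
      simpa [hj, LinearMap.codRestrict] using this
    · exact LinearMap.exact_iff.mpr hkerπ
  -- injectivity of u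
  · intro a b hab
    apply hf
    have := congrArg (fun z : ↥S => (z : Y × X).1) hab
    simpa [LinearMap.codRestrict] using this
  -- exactness
  · apply LinearMap.exact_iff.mpr
    ext ⟨⟨y, x⟩, hz⟩
    simp only [LinearMap.mem_ker, LinearMap.mem_range]
    constructor
    · intro hx
      replace hx : x = 0 := hx
      have hy : y ∈ LinearMap.range f.hom := by
        rw [← hker₁, LinearMap.mem_ker]
        have := (memS (y, x)).mp hz
        simp only at this
        rw [this, hx, map_zero]
      obtain ⟨c, hc⟩ := hy
      exact ⟨c, Subtype.ext (Prod.ext hc hx.symm)⟩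
    · rintro ⟨c, hc⟩
      have := congrArg (fun z : ↥S => (z : Y × X).2) hc
      simpa [LinearMap.codRestrict] using this.symm
  -- surjectivity of v
  · intro x
    obtain ⟨y, hy⟩ := hg (g' x)
    exact ⟨⟨(y, x), (memS _).mpr hy⟩, rfl⟩
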